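/- Let f : ℝ^n → ℝ be a convex polynomial function and let P = {x ∈ ℝ^n : A x ≤ b} be a nonempty polyhedron. Suppose there are a linear subspace U ⊆ ℝ^n, a vector w ∈ U^⊥, constants α ∈ ℝ, β ∈ ℝ^n, and μ > 0 such that for all x ∈ ℝ^n: f(x) = f(x_U) − ⟨w, x⟩ and f(x_U) ≥ α + ⟨β, x_U⟩ + (μ/2)·‖x_U‖². If f is bounded from below on P, then there exists a vector λ ∈ ℝ^m with λ ≥ 0 (componentwise) and a vector u ∈ U such that w = Aᵀλ + u. -/

import Mathlib

open RealInnerProductSpace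

open Finset

variable {E : Type*} [AddCommGroup E] [Module ℝ E] {ι : Type*} [Fintype ι] [DecidableEq ι]

/-- Conic Carathéodory reduction step packaged as strong induction. -/
lemma cara_aux (v : ι → E) (s : Finset ι) :
    ∀ l : ι → ℝ, (∀ i, 0 ≤ l i) → (∀ i ∉ s, l i = 0) →
    ∃ (t : Finset ι) (l' : ι → ℝ), (∀ i, 0 ≤ l' i) ∧ (∀ i ∉ t, l' i = 0) ∧
      LinearIndependent ℝ (fun i : t => v i) ∧ ∑ i, l' i • v i = ∑ i, l i • v i := by
  induction s using Finset.strongInduction with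
  | _ s ih =>
  intro l hl hsupp
  by_cases hind : LinearIndependent ℝ (fun i : s => v i)
  · exact ⟨s, l, hl, hsupp, hind, rfl⟩
  · -- get a nontrivial vanishing combination supported on s
    obtain ⟨g, hg0, j₀, hj₀⟩ := Fintype.not_linearIndependent_iff.mp hind
    set c0 : ι → ℝ := fun i => if h : i ∈ s then g ⟨i, h⟩ else 0 with hc0
    have hkey : ∀ c : ι → ℝ, (∀ i ∉ s, c i = 0) → (∑ i, c i • v i = 0) →
        (∃ i ∈ s, 0 < c i) →
        ∃ (t : Finset ι) (l' : ι → ℝ), (∀ i, 0 ≤ l' i) ∧ (∀ i ∉ t, l' i = 0) ∧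
          LinearIndependent ℝ (fun i : t => v i) ∧ ∑ i, l' i • v i = ∑ i, l i • v i := by
      intro c hcs hcsum ⟨i₁, hi₁s, hi₁⟩
      have hTne : (s.filter (fun i => 0 < c i)).Nonempty := ⟨i₁, by simp [hi₁s, hi₁]⟩
      obtain ⟨i₀, hi₀T, hmin⟩ := Finset.exists_min_image _ (fun i => l i / c i) hTne
      simp only [mem_filter] at hi₀T
      obtain ⟨hi₀s, hi₀c⟩ := hi₀T
      set t : ℝ := l i₀ / c i₀ with ht
      have ht0 : 0 ≤ t := div_nonneg (hl i₀) hi₀c.le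
      set l' : ι → ℝ := fun i => l i - t * c i with hl'
      have hl'0 : ∀ i, 0 ≤ l' i := by
        intro i
        rcases le_or_gt (c i) 0 with h | h
        · have : t * c i ≤ 0 := mul_nonpos_of_nonneg_of_nonpos ht0 h
          simp only [hl']; linarith [hl i]
        · have his : i ∈ s := by
            by_contra hns; rw [hcs i hns] at h; exact lt_irrefl _ h
          have := hmin i (by simp [his, h])
          simp only [hl']
          have : t ≤ l i / c i := this
          nlinarith [(le_div_iff₀ h).mp this]
      have hl'i₀ : l' i₀ = 0 := by
        simp only [hl', ht]
        field_simp
        ring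
      have hsupp' : ∀ i ∉ s.erase i₀, l' i = 0 := by
        intro i hi
        by_cases h : i = i₀
        · rw [h]; exact hl'i₀
        · have hns : i ∉ s := fun hs => hi (Finset.mem_erase.mpr ⟨h, hs⟩)
          simp only [hl', hsupp i hns, hcs i hns]; ring
      have hsum' : ∑ i, l' i • v i = ∑ i, l i • v i := by
        simp only [hl', sub_smul, Finset.sum_sub_distrib, mul_smul]
        rw [← Finset.smul_sum, hcsum, smul_zero, sub_zero]
      obtain ⟨t', l'', h1, h2, h3, h4⟩ :=
        ih (s.erase i₀) (Finset.erase_ssubset hi₀s) l' hl'0 hsupp'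
      exact ⟨t', l'', h1, h2, h3, h4.trans hsum'⟩
    have hc0supp : ∀ i ∉ s, c0 i = 0 := fun i hi => by simp [hc0, hi]
    have hc0sum : ∑ i, c0 i • v i = 0 := by
      rw [← hg0,
        ← Finset.sum_subset (Finset.subset_univ s)
          (fun i _ hi => by rw [hc0supp i hi, zero_smul]),
        ← Finset.sum_coe_sort s (fun i => c0 i • v i)]
      refine Finset.sum_congr rfl fun i _ => ?_
      simp [hc0, i.2]
    rcases lt_trichotomy (g j₀) 0 with hneg | hzero | hpos
    · refine hkey (fun i => -c0 i) (fun i hi => by simp [hc0supp i hi]) ?_ ⟨j₀, j₀.2, ?_⟩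
      · simpa [neg_smul] using congrArg Neg.neg hc0sum
      · simp only [hc0, j₀.2, dif_pos]
        have he : (⟨(j₀ : ι), j₀.2⟩ : {x // x ∈ s}) = j₀ := Subtype.coe_eta _ _
        rw [he]; linarith
    · exact absurd hzero hj₀
    · refine hkey c0 hc0supp hc0sum ⟨j₀, j₀.2, ?_⟩
      simp only [hc0, j₀.2, dif_pos]
      have he : (⟨(j₀ : ι), j₀.2⟩ : {x // x ∈ s}) = j₀ := Subtype.coe_eta _ _
      rw [he]; exact hpos


section Closed
variable {E : Type*} [NormedAddCommGroup E] [NormedSpace ℝ E] [FiniteDimensional ℝ E]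
variable {ι : Type*} [Fintype ι] [DecidableEq ι]

lemma closed_ind (v : ι → E) (hv : LinearIndependent ℝ v) :
    IsClosed {x : E | ∃ l : ι → ℝ, (∀ i, 0 ≤ l i) ∧ x = ∑ i, l i • v i} := by
  let f : (ι → ℝ) →ₗ[ℝ] E :=
    { toFun := fun l => ∑ i, l i • v i
      map_add' := fun a b => by simp [add_smul, Finset.sum_add_distrib]
      map_smul' := fun c a => by simp [smul_smul, Finset.smul_sum]
      }
  have hker : LinearMap.ker f = ⊥ := by
    rw [LinearMap.ker_eq_bot']
    intro l hl
    exact funext (Fintype.linearIndependent_iff.mp hv l hl)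
  have hemb := LinearMap.isClosedEmbedding_of_injective (f := f) hker
  have hOcl : IsClosed {l : ι → ℝ | ∀ i, 0 ≤ l i} := by
    have : {l : ι → ℝ | ∀ i, 0 ≤ l i} = ⋂ i, {l | 0 ≤ l i} := by ext l; simp
    rw [this]
    exact isClosed_iInter fun i => isClosed_le continuous_const (continuous_apply i)
  have himg := hemb.isClosedMap _ hOcl
  convert himg using 1
  ext x
  constructor
  · rintro ⟨l, hl, rfl⟩; exact ⟨l, hl, rfl⟩
  · rintro ⟨l, hl, rfl⟩; exact ⟨l, hl, rfl⟩

lemma closed_cone (v : ι → E) :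
    IsClosed {x : E | ∃ l : ι → ℝ, (∀ i, 0 ≤ l i) ∧ x = ∑ i, l i • v i} := by
  have key : {x : E | ∃ l : ι → ℝ, (∀ i, 0 ≤ l i) ∧ x = ∑ i, l i • v i} =
      ⋃ (s : {s : Finset ι // LinearIndependent ℝ (fun i : s => v i)}),
        {x : E | ∃ l' : ↥(s.1) → ℝ, (∀ i, 0 ≤ l' i) ∧
          x = ∑ i : ↥(s.1), l' i • v i} := by
    ext x
    simp only [Set.mem_iUnion, Set.mem_setOf_eq]
    constructor
    · rintro ⟨l, hl, rfl⟩
      obtain ⟨t, l', h1, h2, h3, h4⟩ := cara_aux v Finset.univ l hl (by simp)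
      refine ⟨⟨t, h3⟩, fun i => l' i, fun i => h1 i, ?_⟩
      rw [← h4]
      exact ((Finset.sum_coe_sort t (fun i => l' i • v i)).trans
        (Finset.sum_subset (Finset.subset_univ t)
          (fun i _ hi => by rw [h2 i hi, zero_smul]))).symm
    · rintro ⟨s, l', hl', rfl⟩
      classical
      refine ⟨fun i => if h : i ∈ s.1 then l' ⟨i, h⟩ else 0, fun i => ?_, ?_⟩
      · by_cases h : i ∈ s.1 <;> simp [h, hl' _]
      · rw [← Finset.sum_subset (Finset.subset_univ s.1)
          (fun i _ hi => by simp [hi]),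
          ← Finset.sum_coe_sort s.1]
        exact Finset.sum_congr rfl fun i _ => by simp [i.2]
  rw [key]
  exact isClosed_iUnion_of_finite fun s =>
    closed_ind (fun i : ↥(s.1) => v i) s.2
end Closed

section Farkas
variable {E : Type*} [NormedAddCommGroup E] [InnerProductSpace ℝ E] [FiniteDimensional ℝ E]
variable {ι : Type*} [Fintype ι] [DecidableEq ι]

open RealInnerProductSpace in
lemma farkas_cone (v : ι → E) (w : E)
    (h : ∀ y : E, (∀ i, 0 ≤ ⟪v i, y⟫) → 0 ≤ ⟪y, w⟫) :
    ∃ l : ι → ℝ, (∀ i, 0 ≤ l i) ∧ w = ∑ i, l i • v i := by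
  set C : Set E := {x : E | ∃ l : ι → ℝ, (∀ i, 0 ≤ l i) ∧ x = ∑ i, l i • v i} with hC
  by_contra hcon
  have hwC : w ∉ C := fun ⟨l, hl, hw⟩ => hcon ⟨l, hl, hw⟩
  let K : ConvexCone ℝ E :=
    { carrier := C
      smul_mem' := by
        rintro c hc x ⟨l, hl, rfl⟩
        exact ⟨fun i => c * l i, fun i => mul_nonneg hc.le (hl i),
          by simp [Finset.smul_sum, mul_smul]⟩
      add_mem' := by
        rintro x ⟨l, hl, rfl⟩ y ⟨l', hl', rfl⟩
        exact ⟨fun i => l i + l' i, fun i => add_nonneg (hl i) (hl' i),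
          by simp [add_smul, Finset.sum_add_distrib]⟩ }
  have hne : (K : Set E).Nonempty := ⟨0, ⟨fun _ => 0, fun _ => le_refl 0, by simp⟩⟩
  have hcl : IsClosed (K : Set E) := closed_cone v
  let PC : ProperCone ℝ E :=
    { toSubmodule :=
        { carrier := C
          zero_mem' := ⟨fun _ => 0, fun _ => le_refl 0, by simp⟩
          add_mem' := fun {a b} ha hb => K.add_mem' ha hb
          smul_mem' := by
            rintro c x ⟨l, hl, rfl⟩
            exact ⟨fun i => (c : ℝ) * l i, fun i => mul_nonneg c.2 (hl i),
              by simp [Finset.smul_sum, mul_smul, NNReal.smul_def]⟩ }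
      isClosed' := hcl }
  obtain ⟨y, hy1, hy2⟩ :=
    PC.hyperplane_separation' (x₀ := w) hwC
  have hvy : ∀ i, 0 ≤ ⟪v i, y⟫ := by
    intro i
    refine hy1 (v i) (show v i ∈ C from ⟨fun j => if j = i then 1 else 0, fun j => by positivity, ?_⟩)
    simp [ite_smul]
  linarith [h y hvy, hy2, real_inner_comm w y]
end Farkas


/-- Given the structural decomposition of a convex polynomial `f`
that is bounded from below on the nonempty polyhedron `P = {x : Ax ≤ b}`, the vector
`w` admits a Farkas-type representation `w = Aᵀλ + u` with `λ ≥ 0` and `u ∈ U`. -/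
theorem farkas_certificate_of_bounded_below {n m : ℕ}
    (f : EuclideanSpace ℝ (Fin n) → ℝ)
    (hpoly : ∃ p : MvPolynomial (Fin n) ℝ, ∀ x, f x = MvPolynomial.eval (fun i => x i) p)
    (hconv : ConvexOn ℝ Set.univ f)
    (A : Matrix (Fin m) (Fin n) ℝ) (b : Fin m → ℝ)
    (P : Set (EuclideanSpace ℝ (Fin n)))
    (hP : P = {x | ∀ i, A.mulVec (fun j => x j) i ≤ b i})
    (hne : P.Nonempty)
    (U : Submodule ℝ (EuclideanSpace ℝ (Fin n)))
    (w β : EuclideanSpace ℝ (Fin n)) (α μ : ℝ)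
    (hw : w ∈ Uᗮ) (hμ : 0 < μ)
    (hdecomp : ∀ x, f x = f ((U.orthogonalProjectionOnto x : EuclideanSpace ℝ (Fin n))) - ⟪w, x⟫)
    (hlb : ∀ x, α + ⟪β, (U.orthogonalProjectionOnto x : EuclideanSpace ℝ (Fin n))⟫
        + (μ / 2) * ‖(U.orthogonalProjectionOnto x : EuclideanSpace ℝ (Fin n))‖ ^ 2
        ≤ f ((U.orthogonalProjectionOnto x : EuclideanSpace ℝ (Fin n))))
    (hbdd : BddBelow (f '' P)) :
    ∃ lam : Fin m → ℝ, (∀ i, 0 ≤ lam i) ∧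
      ∃ u ∈ U, ∀ j, w j = A.transpose.mulVec lam j + u j := by
  classical
  -- coordinate evaluation as a linear map
  let ev : ∀ _ : Fin n, EuclideanSpace ℝ (Fin n) →ₗ[ℝ] ℝ := fun j =>
    { toFun := fun x => x j, map_add' := fun _ _ => rfl, map_smul' := fun _ _ => rfl }
  have sum_apply : ∀ {κ : Type} [Fintype κ] (g : κ → EuclideanSpace ℝ (Fin n)) (j : Fin n),
      (∑ i, g i) j = ∑ i, g i j := by
    intro κ _ g j
    exact map_sum (ev j) g Finset.univ
  -- generators
  let r : Fin m → EuclideanSpace ℝ (Fin n) := fun i => (WithLp.equiv 2 (Fin n → ℝ)).symm (A i)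
  let p : Fin n → EuclideanSpace ℝ (Fin n) := fun j =>
    (U.orthogonalProjectionOnto (EuclideanSpace.single j 1) : EuclideanSpace ℝ (Fin n))
  have hpU : ∀ j, p j ∈ U := fun j => SetLike.coe_mem _
  let v : Fin m ⊕ (Fin n ⊕ Fin n) → EuclideanSpace ℝ (Fin n) :=
    Sum.elim r (Sum.elim p (fun j => -p j))
  have hinner : ∀ (x y : EuclideanSpace ℝ (Fin n)), ⟪x, y⟫ = ∑ j, x j * y j := by
    intro x y
    simp [PiLp.inner_apply, RCLike.inner_apply, conj_trivial]
    exact Finset.sum_congr rfl fun _ _ => mul_comm _ _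
  have hrinner : ∀ (i : Fin m) (y : EuclideanSpace ℝ (Fin n)), ⟪r i, y⟫ = A.mulVec (fun j => y j) i := by
    intro i y
    rw [hinner]
    simp [r, Matrix.mulVec, dotProduct, WithLp.equiv_symm_apply, PiLp.toLp_apply]
  -- projection formula
  have hproj : ∀ x : EuclideanSpace ℝ (Fin n),
      (U.orthogonalProjectionOnto x : EuclideanSpace ℝ (Fin n)) = ∑ j, x j • p j := by
    intro x
    have hx : x = ∑ j, x j • EuclideanSpace.single j 1 := by
      ext j
      rw [sum_apply]
      simp [EuclideanSpace.single_apply]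
    have hq : (U.orthogonalProjectionOnto x : EuclideanSpace ℝ (Fin n)) =
        (U.subtypeL.comp (U.orthogonalProjectionOnto)) x := rfl
    rw [hq]
    conv_lhs => rw [hx]
    rw [map_sum]
    exact Finset.sum_congr rfl fun j _ => by rw [map_smul]; rfl
  -- Farkas hypothesis
  have hfarkas : ∀ y : EuclideanSpace ℝ (Fin n), (∀ i, 0 ≤ ⟪v i, y⟫) → 0 ≤ ⟪y, w⟫ := by
    intro y hy
    by_contra hyw
    push_neg at hyw
    set d : EuclideanSpace ℝ (Fin n) := -y with hd
    -- d ∈ Uᗮ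
    have hpy : ∀ j, ⟪p j, y⟫ = 0 := by
      intro j
      have h2 := hy (Sum.inr (Sum.inl j))
      have h3 := hy (Sum.inr (Sum.inr j))
      simp only [v, Sum.elim_inr, Sum.elim_inl, inner_neg_left] at h2 h3
      linarith
    have hdU : d ∈ Uᗮ := by
      intro u hu
      have hu2 : (U.orthogonalProjectionOnto u : EuclideanSpace ℝ (Fin n)) = u :=
        Submodule.starProjection_eq_self_iff.mpr hu
      have : ⟪u, y⟫ = 0 := by
        rw [← hu2, hproj, sum_inner]
        refine Finset.sum_eq_zero fun j _ => ?_
        rw [real_inner_smul_left, hpy j, mul_zero]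
      rw [hd, inner_neg_right, this, neg_zero]
    have hAd : ∀ i, A.mulVec (fun j => d j) i ≤ 0 := by
      intro i
      have := hy (Sum.inl i)
      simp only [v, Sum.elim_inl] at this
      rw [← hrinner]
      rw [hd, inner_neg_right]
      linarith
    have hwd : 0 < ⟪w, d⟫ := by
      rw [hd, inner_neg_right, real_inner_comm]
      linarith
    -- unbounded below on P
    obtain ⟨x₀, hx₀⟩ := hne
    obtain ⟨B, hB⟩ := hbdd
    set K := f ((U.orthogonalProjectionOnto x₀ : EuclideanSpace ℝ (Fin n))) - ⟪w, x₀⟫ with hK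
    set t : ℝ := max 0 ((K - B + 1) / ⟪w, d⟫) with htdef
    have ht0 : 0 ≤ t := le_max_left _ _
    have ht1 : K - B + 1 ≤ t * ⟪w, d⟫ := by
      have : (K - B + 1) / ⟪w, d⟫ ≤ t := le_max_right _ _
      calc K - B + 1 = ((K - B + 1) / ⟪w, d⟫) * ⟪w, d⟫ :=
            (div_mul_cancel₀ _ (ne_of_gt hwd)).symm
        _ ≤ t * ⟪w, d⟫ := by nlinarith
    set xt : EuclideanSpace ℝ (Fin n) := x₀ + t • d with hxt
    have hmemP : xt ∈ P := by
      rw [hP] at hx₀ ⊢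
      intro i
      have hco : (fun j => xt j) = (fun j => x₀ j) + t • (fun j => d j) := by
        funext j
        simp [hxt, Pi.add_apply, Pi.smul_apply, smul_eq_mul]
      rw [hco, Matrix.mulVec_add, Matrix.mulVec_smul]
      have := hAd i
      have := hx₀ i
      simp only [Pi.add_apply, Pi.smul_apply, smul_eq_mul]
      nlinarith
    have hprojt : (U.orthogonalProjectionOnto xt : EuclideanSpace ℝ (Fin n)) = (U.orthogonalProjectionOnto x₀ : EuclideanSpace ℝ (Fin n)) := by
      rw [hxt, map_add, map_smul, Submodule.orthogonalProjectionOnto_apply_of_mem_orthogonal hdU]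
      push_cast
      simp
    have hft : f xt = K - t * ⟪w, d⟫ := by
      rw [hdecomp xt, hprojt, hK, hxt, inner_add_right, real_inner_smul_right]
      ring
    have := hB ⟨xt, hmemP, rfl⟩
    rw [hft] at this
    linarith
  obtain ⟨l, hl0, hlw⟩ := farkas_cone v w hfarkas
  refine ⟨fun i => l (Sum.inl i), fun i => hl0 _, 
    (∑ j, l (Sum.inr (Sum.inl j)) • p j) + (∑ j, l (Sum.inr (Sum.inr j)) • (-p j)), 
    Submodule.add_mem _ (Submodule.sum_mem _ fun j _ => Submodule.smul_mem _ _ (hpU j))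
      (Submodule.sum_mem _ fun j _ => Submodule.smul_mem _ _ (Submodule.neg_mem _ (hpU j))), ?_⟩
  intro j
  have hsplit : w = (∑ i, l (Sum.inl i) • r i) +
      ((∑ j, l (Sum.inr (Sum.inl j)) • p j) + (∑ j, l (Sum.inr (Sum.inr j)) • (-p j))) := by
    rw [hlw, Fintype.sum_sum_type, Fintype.sum_sum_type]
    rfl
  have hwj := congrArg (fun x : EuclideanSpace ℝ (Fin n) => x j) hsplit
  simp only at hwj
  rw [hwj]
  have h1 : ((∑ i, l (Sum.inl i) • r i : EuclideanSpace ℝ (Fin n))) j = A.transpose.mulVec (fun i => l (Sum.inl i)) j := by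
    rw [sum_apply]
    simp [Matrix.mulVec, dotProduct, Matrix.transpose_apply, r,
      WithLp.equiv_symm_apply, PiLp.toLp_apply, mul_comm]
  have h2 : ∀ (a c : EuclideanSpace ℝ (Fin n)), (a + c) j = a j + c j := fun a c => rfl
  rw [h2, h1]
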